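/- Let K₂ and A₂₂ be real (n-m)×(n-m) matrices with K₂ diagonal, A₂₂ entrywise nonnegative, and row sums satisfying ∑_j (A₂₂)_{ij} < (K₂)_{ii} for every row i (strict diagonal dominance of K₂ - A₂₂). Then for any τ_r ≥ 0, every root μ ∈ ℂ of det(μI + K₂ - A₂₂·exp(-μτ_r)) = 0 satisfies Re(μ) < 0. -/

import Mathlib

/-- If `K₂` is diagonal, `A₂₂` nonnegative, and `K₂ - A₂₂` is strictly diagonally
dominant, then every root of `det(μI + K₂ - A₂₂ e^{-μτ_r}) = 0` has negative real part. -/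
theorem unpinned_subsystem_stable (k : ℕ) (K₂ A₂₂ : Matrix (Fin k) (Fin k) ℝ)
    (hK : ∀ i j, i ≠ j → K₂ i j = 0)
    (hA : ∀ i j, 0 ≤ A₂₂ i j) (hdom : ∀ i, ∑ j, A₂₂ i j < K₂ i i)
    (τr : ℝ) (hτr : 0 ≤ τr) (μ : ℂ)
    (hroot : (μ • (1 : Matrix (Fin k) (Fin k) ℂ) + K₂.map Complex.ofReal
        - Complex.exp (-(μ * τr)) • A₂₂.map Complex.ofReal).det = 0) :
    μ.re < 0 := by
  by_contra hre
  push_neg at hre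
  set e : ℂ := Complex.exp (-(μ * τr)) with he
  set M : Matrix (Fin k) (Fin k) ℂ :=
    μ • (1 : Matrix (Fin k) (Fin k) ℂ) + K₂.map Complex.ofReal - e • A₂₂.map Complex.ofReal
    with hM
  have hnorm_e : ‖e‖ ≤ 1 := by
    rw [he, Complex.norm_exp]
    apply Real.exp_le_one_iff.mpr
    simp only [Complex.neg_re, Complex.mul_re, Complex.ofReal_re, Complex.ofReal_im]
    nlinarith
  have key : ∀ i, ∑ j ∈ Finset.univ.erase i, ‖M i j‖ < ‖M i i‖ := by
    intro i
    have hoff : ∀ j ∈ Finset.univ.erase i, ‖M i j‖ ≤ A₂₂ i j := by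
      intro j hj
      have hij : i ≠ j := (Finset.ne_of_mem_erase hj).symm
      have : M i j = -(e * (A₂₂ i j : ℂ)) := by
        simp [hM, Matrix.one_apply_ne hij, hK i j hij, Matrix.map_apply]
      rw [this, norm_neg, norm_mul, Complex.norm_real, Real.norm_of_nonneg (hA i j)]
      exact mul_le_of_le_one_left (hA i j) hnorm_e
    have hsum : ∑ j ∈ Finset.univ.erase i, ‖M i j‖ ≤ ∑ j ∈ Finset.univ.erase i, A₂₂ i j :=
      Finset.sum_le_sum hoff
    have hsum2 : ∑ j ∈ Finset.univ.erase i, A₂₂ i j = (∑ j, A₂₂ i j) - A₂₂ i i :=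
      Finset.sum_erase_eq_sub (Finset.mem_univ i)
    have hdiag : K₂ i i - A₂₂ i i ≤ ‖M i i‖ := by
      have hMii : M i i = μ + (K₂ i i : ℂ) - e * (A₂₂ i i : ℂ) := by
        simp [hM, Matrix.one_apply_eq, Matrix.map_apply]
      have hre' : (M i i).re ≤ ‖M i i‖ := Complex.re_le_norm _
      have : K₂ i i - A₂₂ i i ≤ (M i i).re := by
        rw [hMii]
        simp only [Complex.sub_re, Complex.add_re, Complex.ofReal_re, Complex.mul_re,
          Complex.ofReal_im]
        have h1 : e.re * A₂₂ i i ≤ A₂₂ i i := by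
          have h2 : e.re ≤ 1 := le_trans (Complex.re_le_norm e) hnorm_e
          nlinarith [hA i i]
        nlinarith
      linarith
    have := hdom i
    linarith
  exact absurd hroot (det_ne_zero_of_sum_row_lt_diag key)
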